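/- Let Θ_0 ⊂ ℝ² be compact, let Λ = [λ̲, λ̄] ⊂ (0, 1), let M : Θ_0 → [0, 1] and M_n : Θ_0 → [0, 1] (n = 1, 2, ...) be measurable functions with η_n := sup_{θ ∈ Θ_0} |M_n(θ) − M(θ)| → 0 as n → ∞, and suppose lim_{δ → 0} sup_{λ ∈ Λ} ℒ{θ ∈ Θ_0 : |M(θ) − λ| < δ} = 0, where ℒ denotes Lebesgue measure on ℝ². For λ ∈ Λ set Θ_λ = {θ ∈ Θ_0 : M(θ) ≥ λ} and Θ_{λ,n} = {θ ∈ Θ_0 : M_n(θ) ≥ λ}. Then sup_{λ ∈ Λ} ℒ{Θ_λ Δ Θ_{λ,n}} → 0 as n → ∞, where Δ denotes symmetric difference; moreover, for every n and λ ∈ Λ one has the inclusion Θ_λ Δ Θ_{λ,n} ⊆ {θ ∈ Θ_0 : |M(θ) − λ| ≤ η_n}. -/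
import Mathlib


open MeasureTheory Filter

/-- Level-set convergence (Step 1 of the excess-mass theorem): if `Mₙ → M` uniformly
on a compact `Θ₀` and `M` has no flat parts over levels `λ ∈ [λ̲, λ̄] ⊂ (0,1)`, then
the empirical level sets converge to the true level sets in Lebesgue measure,
uniformly over `λ`; moreover `Θ_λ Δ Θ_{λ,n} ⊆ {θ : |M(θ) − λ| ≤ ηₙ}` for all `n, λ`. -/
theorem hough_level_set_convergence
    (Θ0 : Set (ℝ × ℝ)) (hΘ0 : IsCompact Θ0)
    (lo hi : ℝ) (hlo : 0 < lo) (hhi : hi < 1) (hlohi : lo ≤ hi)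
    (M : ℝ × ℝ → ℝ) (Mn : ℕ → ℝ × ℝ → ℝ)
    (hMmeas : Measurable M) (hMnmeas : ∀ n, Measurable (Mn n))
    (hMrange : ∀ θ ∈ Θ0, M θ ∈ Set.Icc (0 : ℝ) 1)
    (hMnrange : ∀ n, ∀ θ ∈ Θ0, Mn n θ ∈ Set.Icc (0 : ℝ) 1)
    (η : ℕ → ℝ)
    (hη : ∀ n, η n = ⨆ θ : Θ0, |Mn n θ.1 - M θ.1|)
    (hηto : Tendsto η atTop (nhds 0))
    (hflat : Tendsto
      (fun δ : ℝ => ⨆ lam ∈ Set.Icc lo hi, volume {θ ∈ Θ0 | |M θ - lam| < δ})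
      (nhdsWithin 0 (Set.Ioi 0)) (nhds 0)) :
    Tendsto
      (fun n => ⨆ lam ∈ Set.Icc lo hi,
        volume (symmDiff {θ ∈ Θ0 | lam ≤ M θ} {θ ∈ Θ0 | lam ≤ Mn n θ}))
      atTop (nhds 0) ∧
    ∀ n : ℕ, ∀ lam ∈ Set.Icc lo hi,
      symmDiff {θ ∈ Θ0 | lam ≤ M θ} {θ ∈ Θ0 | lam ≤ Mn n θ}
        ⊆ {θ ∈ Θ0 | |M θ - lam| ≤ η n} := by
  have hbound : ∀ n, BddAbove (Set.range fun θ : Θ0 => |Mn n θ.1 - M θ.1|) := by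
    intro n
    refine ⟨2, Set.forall_mem_range.2 fun θ => ?_⟩
    have h1 := hMrange θ.1 θ.2
    have h2 := hMnrange n θ.1 θ.2
    rw [abs_sub_le_iff]
    constructor <;> [linarith [h1.1, h1.2, h2.1, h2.2]; linarith [h1.1, h1.2, h2.1, h2.2]]
  have hη_ge : ∀ n θ, θ ∈ Θ0 → |Mn n θ - M θ| ≤ η n := by
    intro n θ hθ
    rw [hη]
    exact le_ciSup (hbound n) ⟨θ, hθ⟩
  have key : ∀ n : ℕ, ∀ lam ∈ Set.Icc lo hi,
      symmDiff {θ ∈ Θ0 | lam ≤ M θ} {θ ∈ Θ0 | lam ≤ Mn n θ}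
        ⊆ {θ ∈ Θ0 | |M θ - lam| ≤ η n} := by
    intro n lam _ θ hθ
    rw [Set.mem_symmDiff] at hθ
    rcases hθ with ⟨⟨hθ0, h1⟩, h2⟩ | ⟨⟨hθ0, h1⟩, h2⟩
    · have h2' : ¬ lam ≤ Mn n θ := fun h => h2 ⟨hθ0, h⟩
      push_neg at h2'
      have h3 := abs_le.mp (hη_ge n θ hθ0)
      have hnn : (0:ℝ) ≤ η n := le_trans (abs_nonneg _) (hη_ge n θ hθ0)
      exact ⟨hθ0, abs_le.2 ⟨by linarith, by linarith [h3.1]⟩⟩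
    · have h2' : ¬ lam ≤ M θ := fun h => h2 ⟨hθ0, h⟩
      push_neg at h2'
      have h3 := abs_le.mp (hη_ge n θ hθ0)
      have hnn : (0:ℝ) ≤ η n := le_trans (abs_nonneg _) (hη_ge n θ hθ0)
      exact ⟨hθ0, abs_le.2 ⟨by linarith [h3.2], by linarith⟩⟩
  refine ⟨?_, key⟩
  rw [ENNReal.tendsto_atTop_zero]
  intro ε hε
  have hev : ∀ᶠ δ in nhdsWithin (0:ℝ) (Set.Ioi 0),
      (⨆ lam ∈ Set.Icc lo hi, volume {θ ∈ Θ0 | |M θ - lam| < δ}) < ε ∧ δ ∈ Set.Ioi (0:ℝ) :=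
    (hflat.eventually (gt_mem_nhds hε)).and self_mem_nhdsWithin
  obtain ⟨δ, hFδ, hδpos⟩ := hev.exists
  obtain ⟨N, hN⟩ := (Metric.tendsto_atTop.mp hηto δ hδpos)
  refine ⟨N, fun n hn => ?_⟩
  have hηδ : η n < δ := by
    have := hN n hn
    rw [Real.dist_eq, sub_zero] at this
    exact lt_of_le_of_lt (le_abs_self _) this
  refine le_trans ?_ hFδ.le
  refine iSup₂_le fun lam hlam => ?_
  refine le_trans (measure_mono ?_)
    (le_iSup₂ (f := fun lam (_ : lam ∈ Set.Icc lo hi) =>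
      volume {θ ∈ Θ0 | |M θ - lam| < δ}) lam hlam)
  intro θ hθ
  exact ⟨(key n lam hlam hθ).1, lt_of_le_of_lt (key n lam hlam hθ).2 hηδ⟩
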